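/- For every integer n ≥ 2, the number of cyclic permutations of length n avoiding all three cyclic patterns [1324], [1342], and [1423] equals n−1; that is, #Av_n([1324],[1342],[1423]) = n−1. -/

import Mathlib

/-- A sequence `σ` of length `n` (with distinct values) contains the pattern `π`
of length `k` if some subsequence of `σ` is order isomorphic to `π`. -/
def ContainsPat {n k : ℕ} (σ : Fin n → Fin n) (π : Fin k → ℕ) : Prop :=
  ∃ f : Fin k → Fin n, StrictMono f ∧ ∀ i j : Fin k, π i < π j ↔ σ (f i) < σ (f j)

/-- The rotation of the sequence `σ` starting at position `r`. -/
def rotSeq {n : ℕ} (σ : Fin n → Fin n) (r : Fin n) : Fin n → Fin n :=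
  fun i => σ (i + r)

/-- The cyclic permutation `[σ]` contains the cyclic pattern `[π]` if some
rotation of `σ` contains `π` linearly. -/
def CycContains {n k : ℕ} (σ : Fin n → Fin n) (π : Fin k → ℕ) : Prop :=
  ∃ r : Fin n, ContainsPat (rotSeq σ r) π

/-- The cyclic permutation `[σ]` avoids the cyclic pattern `[π]`. -/
def CycAvoids {n k : ℕ} (σ : Fin n → Fin n) (π : Fin k → ℕ) : Prop :=
  ¬ CycContains σ π

/-- The cyclic permutation `[σ]`, i.e. the set of all rotations of `σ`. -/
def CycClass {n : ℕ} (σ : Fin n → Fin n) : Set (Fin n → Fin n) :=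
  Set.range (rotSeq σ)

/-- The set of cyclic permutations (rotation classes) of length `n` all of whose
representatives are permutations and which satisfy the (rotation-invariant)
predicate `P`. -/
def AvClasses (n : ℕ) (P : (Fin n → Fin n) → Prop) : Set (Set (Fin n → Fin n)) :=
  { C | ∃ σ : Equiv.Perm (Fin n), C = CycClass ⇑σ ∧ P ⇑σ }

/-- The cyclic descent number: the number of indices `i` (mod `n`) with
`σ i > σ (i+1)`. -/
def cdes {n : ℕ} (σ : Fin n → Fin n) : ℕ :=
  (Finset.univ.filter fun i : Fin n =>
    σ ⟨(↑i + 1) % n, Nat.mod_lt _ i.pos⟩ < σ i).card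

/-- The cyclic peak number: the number of indices `i` (mod `n`) with
`σ (i-1) < σ i > σ (i+1)`. -/
def cpk {n : ℕ} (σ : Fin n → Fin n) : ℕ :=
  (Finset.univ.filter fun i : Fin n =>
    σ ⟨(↑i + (n - 1)) % n, Nat.mod_lt _ i.pos⟩ < σ i ∧
    σ ⟨(↑i + 1) % n, Nat.mod_lt _ i.pos⟩ < σ i).card

/-- the canonical avoider: `0,1,...,k-1, n-1, n-2, ..., k`. -/
def stdPerm (n k : ℕ) : Fin n → Fin n :=
  fun i => if _ : i.val < k then i else ⟨n - 1 + k - i.val, by omega⟩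

/-- `Bad σ` : σ cyclically contains one of the three patterns, normalized so that
the "1" of the pattern sits at the cut point. -/
def Bad {n : ℕ} (σ : Fin n → Fin n) : Prop :=
  ∃ r j k l : Fin n, 0 < j.val ∧ j < k ∧ k < l ∧
    σ r < σ (j + r) ∧ σ r < σ (k + r) ∧ σ r < σ (l + r) ∧
    ((σ (k+r) < σ (j+r) ∧ σ (k+r) < σ (l+r) ∧ σ (j+r) < σ (l+r)) ∨
     (σ (k+r) < σ (j+r) ∧ σ (k+r) < σ (l+r) ∧ σ (l+r) < σ (j+r)) ∨
     (σ (j+r) < σ (k+r) ∧ σ (l+r) < σ (j+r) ∧ σ (l+r) < σ (k+r)))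

section Bridge
variable {n : ℕ} {σ : Fin n → Fin n}

/-- shared skeleton for the three forward bridges -/
lemma bad_of_occ (r : Fin n) (f : Fin 4 → Fin n) (hm : StrictMono f)
    (h01 : σ (f 0 + r) < σ (f 1 + r)) (h02 : σ (f 0 + r) < σ (f 2 + r))
    (h03 : σ (f 0 + r) < σ (f 3 + r))
    (hD : (σ (f 2 + r) < σ (f 1 + r) ∧ σ (f 2 + r) < σ (f 3 + r) ∧ σ (f 1 + r) < σ (f 3 + r)) ∨
          (σ (f 2 + r) < σ (f 1 + r) ∧ σ (f 2 + r) < σ (f 3 + r) ∧ σ (f 3 + r) < σ (f 1 + r)) ∨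
          (σ (f 1 + r) < σ (f 2 + r) ∧ σ (f 3 + r) < σ (f 1 + r) ∧ σ (f 3 + r) < σ (f 2 + r))) :
    Bad σ := by
  haveI : NeZero n := ⟨by rintro rfl; exact (f 0).elim0⟩
  have h01' : f 0 ≤ f 1 := (hm (by decide : (0:Fin 4) < 1)).le
  have h02' : f 0 ≤ f 2 := (hm (by decide : (0:Fin 4) < 2)).le
  have h03' : f 0 ≤ f 3 := (hm (by decide : (0:Fin 4) < 3)).le
  have key : ∀ i : Fin 4, f i - f 0 + (r + f 0) = f i + r := by
    intro i
    calc f i - f 0 + (r + f 0) = f i - f 0 + f 0 + r := by abel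
      _ = f i + r := by rw [sub_add_cancel]
  have e0 : σ (r + f 0) = σ (f 0 + r) := by rw [add_comm]
  have e : ∀ i : Fin 4, σ (f i - f 0 + (r + f 0)) = σ (f i + r) := fun i => by rw [key]
  refine ⟨r + f 0, f 1 - f 0, f 2 - f 0, f 3 - f 0, ?_, ?_, ?_, ?_, ?_, ?_, ?_⟩
  · have := hm (by decide : (0:Fin 4) < 1)
    rw [Fin.sub_val_of_le h01']; rw [Fin.lt_def] at this; omega
  · have h12 := hm (by decide : (1:Fin 4) < 2)
    rw [Fin.lt_def, Fin.sub_val_of_le h01', Fin.sub_val_of_le h02']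
    rw [Fin.le_def] at h01' h02'; rw [Fin.lt_def] at h12; omega
  · have h23 := hm (by decide : (2:Fin 4) < 3)
    rw [Fin.lt_def, Fin.sub_val_of_le h02', Fin.sub_val_of_le h03']
    rw [Fin.le_def] at h02' h03'; rw [Fin.lt_def] at h23; omega
  · rw [e0, e 1]; exact h01
  · rw [e0, e 2]; exact h02
  · rw [e0, e 3]; exact h03
  · rw [e 1, e 2, e 3]; exact hD

lemma bad_of_1324 (h : CycContains σ ![1,3,2,4]) : Bad σ := by
  obtain ⟨r, f, hm, hf⟩ := h
  have hf' : ∀ i j : Fin 4, (![1,3,2,4] i < ![1,3,2,4] j) ↔ σ (f i + r) < σ (f j + r) := hf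
  exact bad_of_occ r f hm ((hf' 0 1).mp (by decide)) ((hf' 0 2).mp (by decide))
    ((hf' 0 3).mp (by decide))
    (Or.inl ⟨(hf' 2 1).mp (by decide), (hf' 2 3).mp (by decide), (hf' 1 3).mp (by decide)⟩)

lemma bad_of_1423 (h : CycContains σ ![1,4,2,3]) : Bad σ := by
  obtain ⟨r, f, hm, hf⟩ := h
  have hf' : ∀ i j : Fin 4, (![1,4,2,3] i < ![1,4,2,3] j) ↔ σ (f i + r) < σ (f j + r) := hf
  exact bad_of_occ r f hm ((hf' 0 1).mp (by decide)) ((hf' 0 2).mp (by decide))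
    ((hf' 0 3).mp (by decide))
    (Or.inr <| Or.inl ⟨(hf' 2 1).mp (by decide), (hf' 2 3).mp (by decide),
      (hf' 3 1).mp (by decide)⟩)

lemma bad_of_1342 (h : CycContains σ ![1,3,4,2]) : Bad σ := by
  obtain ⟨r, f, hm, hf⟩ := h
  have hf' : ∀ i j : Fin 4, (![1,3,4,2] i < ![1,3,4,2] j) ↔ σ (f i + r) < σ (f j + r) := hf
  exact bad_of_occ r f hm ((hf' 0 1).mp (by decide)) ((hf' 0 2).mp (by decide))
    ((hf' 0 3).mp (by decide))
    (Or.inr <| Or.inr ⟨(hf' 1 2).mp (by decide), (hf' 3 1).mp (by decide),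
      (hf' 3 2).mp (by decide)⟩)

end Bridge

section Bridge2
variable {n : ℕ} {σ : Fin n → Fin n}

lemma occ_pattern [NeZero n] (r j k l : Fin n) (π : Fin 4 → ℕ)
    (hj : 0 < j.val) (hjk : j < k) (hkl : k < l)
    (hiff : ∀ a b : Fin 4, π a < π b ↔
      σ (![(0:Fin n), j, k, l] a + r) < σ (![(0:Fin n), j, k, l] b + r)) :
    CycContains σ π := by
  refine ⟨r, ![0, j, k, l], ?_, hiff⟩
  rw [Fin.strictMono_iff_lt_succ]
  intro i
  fin_cases i
  · show (0:Fin n) < j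
    rw [Fin.lt_def, Fin.val_zero]; exact hj
  · show j < k; exact hjk
  · show k < l; exact hkl

lemma cyc_of_bad (h : Bad σ) :
    CycContains σ ![1,3,2,4] ∨ CycContains σ ![1,3,4,2] ∨ CycContains σ ![1,4,2,3] := by
  obtain ⟨r, j, k, l, hj, hjk, hkl, h1, h2, h3, hD⟩ := h
  haveI : NeZero n := ⟨by rintro rfl; exact j.elim0⟩
  have z : (0:Fin n) + r = r := by rw [zero_add]
  rcases hD with ⟨a1, a2, a3⟩ | ⟨a1, a2, a3⟩ | ⟨a1, a2, a3⟩
  · refine Or.inl (occ_pattern r j k l _ hj hjk hkl ?_)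
    intro a b
    fin_cases a <;> fin_cases b <;> norm_num [z] <;>
      simp only [Fin.lt_def] at * <;> omega
  · refine Or.inr (Or.inr (occ_pattern r j k l _ hj hjk hkl ?_))
    intro a b
    fin_cases a <;> fin_cases b <;> norm_num [z] <;>
      simp only [Fin.lt_def] at * <;> omega
  · refine Or.inr (Or.inl (occ_pattern r j k l _ hj hjk hkl ?_))
    intro a b
    fin_cases a <;> fin_cases b <;> norm_num [z] <;>
      simp only [Fin.lt_def] at * <;> omega

end Bridge2

lemma stdPerm_val (n k : ℕ) (x : Fin n) :
    (stdPerm n k x).val = if x.val < k then x.val else n - 1 + k - x.val := by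
  unfold stdPerm
  split_ifs <;> rfl

lemma mod_two_n {a n : ℕ} (hn : 0 < n) (h : a < 2 * n) :
    a % n = if a < n then a else a - n := by
  split_ifs with h'
  · exact Nat.mod_eq_of_lt h'
  · rw [Nat.mod_eq_sub_mod (le_of_not_gt h'), Nat.mod_eq_of_lt (by omega)]

lemma stdPerm_val_cases (n k : ℕ) (x : Fin n) :
    (x.val < k ∧ (stdPerm n k x).val = x.val) ∨
    (¬ x.val < k ∧ (stdPerm n k x).val = n - 1 + k - x.val) := by
  by_cases h : x.val < k
  · exact Or.inl ⟨h, by rw [stdPerm_val]; simp [h]⟩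
  · exact Or.inr ⟨h, by rw [stdPerm_val]; simp [h]⟩

lemma val_add_cases {n : ℕ} (x r : Fin n) :
    ((x + r).val = x.val + r.val ∧ x.val + r.val < n) ∨
    ((x + r).val = x.val + r.val - n ∧ n ≤ x.val + r.val) := by
  have h := Fin.val_add x r
  have hx := x.isLt
  have hr := r.isLt
  rw [mod_two_n (by omega) (by omega)] at h
  split_ifs at h with h'
  · exact Or.inl ⟨h, h'⟩
  · exact Or.inr ⟨h, by omega⟩

lemma key_avoid (n k : ℕ) (hk1 : 1 ≤ k) (hk2 : k ≤ n - 1) :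
    ¬ Bad (stdPerm n k) := by
  rintro ⟨r, j, l, m, hj, hjl, hlm, h1, h2, h3, hD⟩
  have dj := stdPerm_val_cases n k (j + r)
  have dl := stdPerm_val_cases n k (l + r)
  have dm := stdPerm_val_cases n k (m + r)
  have dr := stdPerm_val_cases n k r
  have wj := val_add_cases j r
  have wl := val_add_cases l r
  have wm := val_add_cases m r
  have hrn := r.isLt
  have hjn := j.isLt
  have hln := l.isLt
  have hmn := m.isLt
  simp only [Fin.lt_def] at h1 h2 h3 hD hjl hlm
  omega

lemma stdPerm_injective (n k : ℕ) : Function.Injective (stdPerm n k) := by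
  intro x y h
  have hx := stdPerm_val n k x
  have hy := stdPerm_val n k y
  rw [h] at hx
  have hxn := x.isLt
  have hyn := y.isLt
  apply Fin.ext
  split_ifs at hx hy <;> omega

lemma stdPerm_bijective (n k : ℕ) : Function.Bijective (stdPerm n k) :=
  Finite.injective_iff_bijective.mp (stdPerm_injective n k)

/-- structure theorem: a permutation avoiding the three patterns, rotated to start
at its minimum value, is a `stdPerm`. -/
lemma structure_thm {n : ℕ} (hn : 2 ≤ n) (σ : Equiv.Perm (Fin n)) (hB : ¬ Bad ⇑σ) :
    ∃ k : ℕ, 1 ≤ k ∧ k ≤ n - 1 ∧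
      rotSeq ⇑σ (σ.symm ⟨0, by omega⟩) = stdPerm n k := by
  haveI : NeZero n := ⟨by omega⟩
  set r₀ : Fin n := σ.symm ⟨0, by omega⟩ with hr₀
  set τ : Equiv.Perm (Fin n) := (Equiv.addRight r₀).trans σ with hτdef
  have hτ : ∀ i, τ i = σ (i + r₀) := fun i => rfl
  have hτ0 : τ 0 = ⟨0, by omega⟩ := by
    rw [hτ, zero_add, hr₀, Equiv.apply_symm_apply]
  have hτinj : Function.Injective ⇑τ := τ.injective
  -- instantiate ¬Bad at r = r₀
  have NB : ∀ j k l : Fin n, 0 < j.val → j < k → k < l →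
      ¬ (τ 0 < τ j ∧ τ 0 < τ k ∧ τ 0 < τ l ∧
        ((τ k < τ j ∧ τ k < τ l ∧ τ j < τ l) ∨
         (τ k < τ j ∧ τ k < τ l ∧ τ l < τ j) ∨
         (τ j < τ k ∧ τ l < τ j ∧ τ l < τ k))) := by
    intro j k l hj hjk hkl hcon
    apply hB
    refine ⟨r₀, j, k, l, hj, hjk, hkl, ?_, ?_, ?_, ?_⟩
    · have := hcon.1; rwa [hτ, hτ, zero_add] at this
    · have := hcon.2.1; rwa [hτ, hτ, zero_add] at this
    · have := hcon.2.2.1; rwa [hτ, hτ, zero_add] at this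
    · have := hcon.2.2.2
      simp only [hτ, zero_add] at this ⊢
      exact this
  have hpos : ∀ j : Fin n, j ≠ 0 → τ 0 < τ j := by
    intro j hjne
    have h1 : τ j ≠ τ 0 := fun h => hjne (hτinj h)
    rw [hτ0] at h1
    have h2 : (τ j).val ≠ 0 := fun h => h1 (Fin.ext h)
    rw [hτ0, Fin.lt_def]
    exact Nat.pos_of_ne_zero h2
  have ne0 : ∀ x : Fin n, 0 < x.val → x ≠ 0 := by
    intro x hx h; rw [h] at hx; simp at hx
  -- (A): no valley among positions ≥ 1
  have hA : ∀ p q t : Fin n, 0 < p.val → p < q → q < t →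
      τ q < τ p → τ q < τ t → False := by
    intro p q t hp hpq hqt v1 v2
    apply NB p q t hp hpq hqt
    have hpq' : p.val < q.val := hpq
    have hqt' : q.val < t.val := hqt
    refine ⟨hpos p (ne0 p hp), hpos q (ne0 q (by omega)), hpos t (ne0 t (by omega)), ?_⟩
    rcases lt_trichotomy (τ p) (τ t) with h | h | h
    · exact Or.inl ⟨v1, v2, h⟩
    · exact absurd (hτinj h) (by intro hh; rw [hh] at hpq; exact absurd (hpq.trans hqt) (lt_irrefl t))
    · exact Or.inr (Or.inl ⟨v1, v2, h⟩)
  -- (B)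
  have hBB : ∀ p q t : Fin n, 0 < p.val → p < q → q < t →
      τ p < τ q → τ t < τ p → False := by
    intro p q t hp hpq hqt v1 v2
    apply NB p q t hp hpq hqt
    have hpq' : p.val < q.val := hpq
    have hqt' : q.val < t.val := hqt
    exact ⟨hpos p (ne0 p hp), hpos q (ne0 q (by omega)), hpos t (ne0 t (by omega)),
      Or.inr (Or.inr ⟨v1, v2, v2.trans v1⟩)⟩
  -- the position of the maximum value
  set lastF : Fin n := ⟨n - 1, by omega⟩ with hlastF
  set M : Fin n := τ.symm lastF with hMdef
  have hMval : τ M = lastF := Equiv.apply_symm_apply τ lastF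
  have hM0 : M ≠ 0 := by
    intro h
    rw [h, hτ0] at hMval
    simp only [Fin.ext_iff, hlastF, Fin.val_mk] at hMval
    omega
  have hM0' : 0 < M.val := Nat.pos_of_ne_zero (fun h => hM0 (Fin.ext h))
  have hmax : ∀ i : Fin n, i ≠ M → τ i < τ M := by
    intro i hi
    have h1 : τ i ≠ τ M := fun h => hi (hτinj h)
    rw [hMval] at h1 ⊢
    rw [Fin.lt_def]
    have := (τ i).isLt
    have h2 : (τ i).val ≠ n - 1 := fun h => h1 (Fin.ext h)
    simp only [hlastF]
    omega
  have mono_before : ∀ p q : Fin n, p < q → q ≤ M → τ p < τ q := by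
    intro p q hpq hqM
    by_cases hp0 : p = 0
    · rw [hp0]
      apply hpos
      intro h
      rw [hp0, h] at hpq
      exact absurd hpq (lt_irrefl _)
    · by_contra hcon
      have hne : τ p ≠ τ q := fun h => (by rw [hτinj h] at hpq; exact absurd hpq (lt_irrefl _))
      have hlt : τ q < τ p := by
        rcases lt_trichotomy (τ p) (τ q) with h | h | h
        · exact absurd h hcon
        · exact absurd h hne
        · exact h
      rcases eq_or_lt_of_le hqM with hqM' | hqM'
      · have hlt' : τ M < τ p := hqM' ▸ hlt
        have hpM : p ≠ M := fun h => (by rw [h, ← hqM'] at hpq; exact absurd hpq (lt_irrefl _))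
        exact absurd (hmax p hpM) (fun h => absurd (h.trans hlt') (lt_irrefl _))
      · exact hA p q M (Nat.pos_of_ne_zero (fun h => hp0 (Fin.ext h))) hpq hqM' hlt
          (hmax q (by intro h; rw [h] at hqM'; exact absurd hqM' (lt_irrefl _)))
  have anti_after : ∀ p q : Fin n, M ≤ p → p < q → τ q < τ p := by
    intro p q hMp hpq
    rcases eq_or_lt_of_le hMp with hMp' | hMp'
    · rw [← hMp']
      exact hmax q (by intro h; rw [← hMp', h] at hpq; exact absurd hpq (lt_irrefl _))
    · by_contra hcon
      have hne : τ p ≠ τ q := fun h => (by rw [hτinj h] at hpq; exact absurd hpq (lt_irrefl _))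
      have hlt : τ p < τ q := by
        rcases lt_trichotomy (τ p) (τ q) with h | h | h
        · exact h
        · exact absurd h hne
        · exact absurd h hcon
      exact hA M p q hM0' hMp' hpq
        (hmax p (by intro h; rw [h] at hMp'; exact absurd hMp' (lt_irrefl _))) hlt
  have cross : ∀ p q : Fin n, 0 < p.val → p < M → M < q → τ p < τ q := by
    intro p q hp hpM hMq
    by_contra hcon
    have hne : τ q ≠ τ p := fun h =>
      (by rw [hτinj h] at hMq; exact absurd (hpM.trans hMq) (lt_irrefl _))
    have hlt : τ q < τ p := by
      rcases lt_trichotomy (τ p) (τ q) with h | h | h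
      · exact absurd h hcon
      · exact absurd h.symm hne
      · exact h
    exact hBB p M q hp hpM hMq
      (hmax p (by intro h; rw [h] at hpM; exact absurd hpM (lt_irrefl _))) hlt
  -- now compare τ with stdPerm n M.val
  have hMn := M.isLt
  refine ⟨M.val, hM0', by omega, ?_⟩
  set e : Fin n → Fin n := stdPerm n M.val with hedef
  have ord : ∀ i j : Fin n, i < j → (τ i < τ j ↔ e i < e j) := by
    intro i j hij
    have hij' : i.val < j.val := hij
    have hvi := stdPerm_val n M.val i
    have hvj := stdPerm_val n M.val j
    have hin := i.isLt
    have hjn := j.isLt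
    rcases le_or_gt j M with hjM | hjM
    · have hτij := mono_before i j hij hjM
      have hjM' : j.val ≤ M.val := hjM
      simp only [Fin.lt_def] at hτij ⊢
      constructor
      · intro _
        rw [hvi, hvj]
        split_ifs <;> omega
      · intro _; exact hτij
    · rcases le_or_gt M i with hMi | hMi
      · have hτij := anti_after i j hMi hij
        have hMi' : M.val ≤ i.val := hMi
        simp only [Fin.lt_def] at hτij ⊢
        constructor
        · intro h; exact absurd h (by omega)
        · intro h
          rw [hvi, hvj] at h
          split_ifs at h <;> omega
      · -- i < M < j
        have hτij : τ i < τ j := by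
          by_cases hi0 : i = 0
          · rw [hi0]
            apply hpos
            intro h
            rw [hi0, h] at hij
            exact absurd hij (lt_irrefl _)
          · exact cross i j (Nat.pos_of_ne_zero (fun h => hi0 (Fin.ext h))) hMi hjM
        have hMi' : i.val < M.val := hMi
        have hjM' : M.val < j.val := hjM
        simp only [Fin.lt_def] at hτij ⊢
        constructor
        · intro _
          rw [hvi, hvj]
          split_ifs <;> omega
        · intro _; exact hτij
  -- conclude τ = e
  have heinj := stdPerm_injective n M.val
  have hebij := stdPerm_bijective n M.val
  set eE : Equiv.Perm (Fin n) := Equiv.ofBijective e hebij with heE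
  have hords : StrictMono (fun a => τ (eE.symm a)) := by
    intro a b hab
    have h1 : e (eE.symm a) = a := eE.apply_symm_apply a
    have h2 : e (eE.symm b) = b := eE.apply_symm_apply b
    set i := eE.symm a
    set j := eE.symm b
    have he : e i < e j := by rw [h1, h2]; exact hab
    have hne : i ≠ j := by intro h; rw [h, h2] at h1; rw [h1] at hab; exact absurd hab (lt_irrefl _)
    rcases lt_trichotomy i j with h | h | h
    · exact (ord i j h).mpr he
    · exact absurd h hne
    · have := (ord j i h).mp
      have h3 : ¬ (e j < e i) := fun hh => absurd (hh.trans he) (lt_irrefl _)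
      have h4 : ¬ (τ j < τ i) := fun hh => h3 ((ord j i h).mp hh)
      have h5 : τ i ≠ τ j := fun hh => hne (hτinj hh)
      rcases lt_trichotomy (τ i) (τ j) with hh | hh | hh
      · exact hh
      · exact absurd hh h5
      · exact absurd hh h4
  have hid : (fun a => τ (eE.symm a)) = id := by
    apply (hords.range_inj strictMono_id).mp
    rw [Set.range_id]
    apply Set.range_eq_univ.mpr
    intro y
    exact ⟨eE (τ.symm y), by simp⟩
  have hτe : ⇑τ = e := by
    funext i
    have := congrFun hid (e i)
    simp only [id_eq] at this
    calc τ i = τ (eE.symm (e i)) := by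
          congr 1
          rw [show e i = eE i from rfl, Equiv.symm_apply_apply]
      _ = e i := this
  have : rotSeq ⇑σ r₀ = ⇑τ := rfl
  rw [this, hτe]

section Assembly
variable {n : ℕ}

lemma rotSeq_zero [NeZero n] (σ : Fin n → Fin n) : rotSeq σ 0 = σ := by
  funext i; show σ (i + 0) = σ i; rw [add_zero]

lemma rotSeq_rotSeq (σ : Fin n → Fin n) (r s : Fin n) :
    rotSeq (rotSeq σ r) s = rotSeq σ (s + r) := by
  funext i; show σ ((i + s) + r) = σ (i + (s + r)); rw [add_assoc]

lemma cycClass_rotSeq [NeZero n] (σ : Fin n → Fin n) (r : Fin n) :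
    CycClass (rotSeq σ r) = CycClass σ := by
  ext x
  constructor
  · rintro ⟨s, rfl⟩
    exact ⟨s + r, (rotSeq_rotSeq σ r s).symm⟩
  · rintro ⟨t, rfl⟩
    refine ⟨t - r, ?_⟩
    rw [rotSeq_rotSeq, sub_add_cancel]

lemma stdPerm_zero (k : ℕ) (hk : 1 ≤ k) (h0 : 0 < n) :
    stdPerm n k ⟨0, h0⟩ = ⟨0, h0⟩ := by
  unfold stdPerm
  rw [dif_pos (by show 0 < k; omega)]

lemma stdPerm_param_lt {a b : ℕ} (hb2 : b ≤ n - 1) (hn : 2 ≤ n)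
    (h : stdPerm n a = stdPerm n b) (hab : a < b) : False := by
  have hc := congrFun h ⟨a, by omega⟩
  have hva := stdPerm_val n a ⟨a, by omega⟩
  have hvb := stdPerm_val n b ⟨a, by omega⟩
  rw [hc] at hva
  simp only at hva hvb
  split_ifs at hva hvb <;> omega

lemma cycClass_std_injOn (hn : 2 ≤ n) :
    Set.InjOn (fun k => CycClass (stdPerm n k)) (Set.Icc 1 (n-1)) := by
  haveI : NeZero n := ⟨by omega⟩
  intro a ha b hb hab
  simp only at hab
  obtain ⟨ha1, ha2⟩ := ha
  obtain ⟨hb1, hb2⟩ := hb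
  have hmem : stdPerm n b ∈ CycClass (stdPerm n a) := by
    rw [hab]; exact ⟨0, rotSeq_zero _⟩
  obtain ⟨r, hr⟩ := hmem
  have h0 : stdPerm n a r = ⟨0, by omega⟩ := by
    have hc := congrFun hr ⟨0, by omega⟩
    have : (⟨0, by omega⟩ : Fin n) + r = r := by
      apply Fin.ext
      rw [Fin.val_add]
      simp [Nat.mod_eq_of_lt r.isLt]
    rw [show rotSeq (stdPerm n a) r ⟨0, by omega⟩ = stdPerm n a ((⟨0, by omega⟩ : Fin n) + r) from rfl,
      this] at hc
    rw [hc, stdPerm_zero b hb1]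
  have hr0 : r = ⟨0, by omega⟩ := by
    apply stdPerm_injective n a
    rw [h0, stdPerm_zero a ha1]
  rw [hr0] at hr
  have heq : stdPerm n a = stdPerm n b := by
    rw [← hr]
    funext i
    have e1 : (i + (⟨0, by omega⟩ : Fin n)) = i := by
      apply Fin.ext
      rw [Fin.val_add]
      simp [Nat.mod_eq_of_lt i.isLt]
    show stdPerm n a i = stdPerm n a (i + ⟨0, by omega⟩)
    rw [e1]
  rcases lt_trichotomy a b with h | h | h
  · exact absurd (stdPerm_param_lt hb2 hn heq h) id
  · exact h
  · exact absurd (stdPerm_param_lt ha2 hn heq.symm h) id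

end Assembly

theorem card_av_1324_1342_1423 (n : ℕ) (hn : 2 ≤ n) :
    (AvClasses n fun σ => CycAvoids σ ![1,3,2,4] ∧ CycAvoids σ ![1,3,4,2] ∧ CycAvoids σ ![1,4,2,3]).ncard = n - 1 := by
  haveI : NeZero n := ⟨by omega⟩
  have hset : (AvClasses n fun σ => CycAvoids σ ![1,3,2,4] ∧ CycAvoids σ ![1,3,4,2] ∧ CycAvoids σ ![1,4,2,3])
      = (fun k => CycClass (stdPerm n k)) '' Set.Icc 1 (n-1) := by
    ext C
    constructor
    · rintro ⟨σ, hC, h1, h2, h3⟩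
      have hB : ¬ Bad ⇑σ := by
        intro hb
        rcases cyc_of_bad hb with h | h | h
        exacts [h1 h, h2 h, h3 h]
      obtain ⟨k, hk1, hk2, hrot⟩ := structure_thm hn σ hB
      refine ⟨k, ⟨hk1, hk2⟩, ?_⟩
      show CycClass (stdPerm n k) = C
      rw [hC, ← cycClass_rotSeq ⇑σ (σ.symm ⟨0, by omega⟩), hrot]
    · rintro ⟨k, ⟨hk1, hk2⟩, rfl⟩
      refine ⟨Equiv.ofBijective _ (stdPerm_bijective n k), rfl, ?_, ?_, ?_⟩
      · intro h; exact key_avoid n k hk1 hk2 (bad_of_1324 h)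
      · intro h; exact key_avoid n k hk1 hk2 (bad_of_1342 h)
      · intro h; exact key_avoid n k hk1 hk2 (bad_of_1423 h)
  rw [hset, Set.ncard_image_of_injOn (cycClass_std_injOn hn), ← Finset.coe_Icc,
    Set.ncard_coe_finset, Nat.card_Icc]
  omega
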